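/- Let φ_t^k : FΩ_k → FΩ_{k−t} send each k-subset to the sum of its (k−t)-subsets and let φ_t^{k⋆} : FΩ_{k−t} → FΩ_k send each (k−t)-subset to the sum of the k-subsets containing it. Then for Y ∈ Ω_k: Y φ_t^k φ_t^{k⋆} = Σ_{d=0}^{t} C(k−d, t−d) Σ_{X ∈ Ω_k, |X △ Y| = 2d} X, where △ denotes symmetric difference. -/

import Mathlib

/-- The free module over `R` on the `k`-element subsets of `{1,…,n}` (here `k : ℤ`,
so that the module is zero for `k < 0`). -/
def FOmega (R : Type*) [CommRing R] (n : ℕ) (k : ℤ) : Type _ :=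
  {s : Finset (Fin n) // (s.card : ℤ) = k} →₀ R

noncomputable instance (R : Type*) [CommRing R] (n : ℕ) (k : ℤ) :
    AddCommGroup (FOmega R n k) := Finsupp.instAddCommGroup

noncomputable instance (R : Type*) [CommRing R] (n : ℕ) (k : ℤ) :
    Module R (FOmega R n k) := Finsupp.module _ _

/-- The multistep boundary map `FΩ_a → FΩ_b`, sending a subset `Y` of size `a`
to the sum of all its subsets of size `b` (this is `φ_t^a` with `t = a - b`). -/
noncomputable def phi (R : Type*) [CommRing R] (n : ℕ) (a b : ℤ) :
    FOmega R n a →ₗ[R] FOmega R n b :=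
  Finsupp.lift _ R _ fun Y =>
    ∑ X ∈ (Y.1.powerset.filter fun X => (X.card : ℤ) = b).attach,
      Finsupp.single ⟨X.1, (Finset.mem_filter.mp X.2).2⟩ (1 : R)

/-- The dual multistep map `FΩ_a → FΩ_b` (for `b ≥ a`), sending a subset `Y` of size
`a` to the sum of all subsets of size `b` containing it (this is `φ_t^{b⋆}` with
`t = b - a`). -/
noncomputable def phiStar (R : Type*) [CommRing R] (n : ℕ) (a b : ℤ) :
    FOmega R n a →ₗ[R] FOmega R n b :=
  Finsupp.lift _ R _ fun Y =>
    ∑ Z ∈ Finset.univ.filter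
        (fun Z : {s : Finset (Fin n) // (s.card : ℤ) = b} => Y.1 ⊆ Z.1),
      Finsupp.single Z (1 : R)

open scoped symmDiff

lemma phi_single (R : Type*) [CommRing R] (n : ℕ) (a b : ℤ)
    (Y : {s : Finset (Fin n) // (s.card : ℤ) = a}) :
    phi R n a b (Finsupp.single Y 1) =
      ∑ X ∈ (Y.1.powerset.filter fun X => (X.card : ℤ) = b).attach,
        Finsupp.single ⟨X.1, (Finset.mem_filter.mp X.2).2⟩ (1 : R) := by
  rw [phi]
  erw [Finsupp.lift_apply, Finsupp.sum_single_index (by rw [zero_smul]), one_smul]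
  rfl

lemma phiStar_single (R : Type*) [CommRing R] (n : ℕ) (a b : ℤ)
    (Y : {s : Finset (Fin n) // (s.card : ℤ) = a}) :
    phiStar R n a b (Finsupp.single Y 1) =
      ∑ Z ∈ Finset.univ.filter
          (fun Z : {s : Finset (Fin n) // (s.card : ℤ) = b} => Y.1 ⊆ Z.1),
        Finsupp.single Z (1 : R) := by
  rw [phiStar]
  erw [Finsupp.lift_apply, Finsupp.sum_single_index (by rw [zero_smul]), one_smul]
  rfl

/-- for a `k`-subset `Y`, applying `φ_t^k` and then the dual map
`φ_t^{k⋆}` gives `∑_{d=0}^{t} C(k-d, t-d) ∑_{X : |X △ Y| = 2d} X`. -/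
theorem phi_phiStar_apply (R : Type*) [CommRing R] (n : ℕ) (k t : ℕ)
    (htk : t ≤ k) (hkn : k ≤ n)
    (Y : {s : Finset (Fin n) // (s.card : ℤ) = (k : ℤ)}) :
    phiStar R n ((k : ℤ) - t) k (phi R n k ((k : ℤ) - t) (Finsupp.single Y 1)) =
      ∑ d ∈ Finset.range (t + 1), ((k - d).choose (t - d) : R) •
        ∑ X ∈ Finset.univ.filter
            (fun X : {s : Finset (Fin n) // (s.card : ℤ) = (k : ℤ)} =>
              (X.1 ∆ Y.1).card = 2 * d),
          Finsupp.single X (1 : R) := by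
  refine Finsupp.ext fun X => ?_
  have hXk : X.1.card = k := by exact_mod_cast X.2
  have hYk : Y.1.card = k := by exact_mod_cast Y.2
  set c := (X.1 ∩ Y.1).card with hc
  have hck : c ≤ k := hYk ▸ Finset.card_le_card Finset.inter_subset_right
  have hsymm : (X.1 ∆ Y.1).card = 2 * (k - c) := by
    have h1 : (X.1 ∆ Y.1).card = (X.1 ∪ Y.1).card - (X.1 ∩ Y.1).card := by
      rw [symmDiff_eq_sup_sdiff_inf, Finset.sup_eq_union, Finset.inf_eq_inter]
      exact Finset.card_sdiff_of_subset (Finset.inter_subset_union)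
    have h2 := Finset.card_union_add_card_inter X.1 Y.1
    omega
  rw [phi_single]
  erw [map_sum]
  simp only [phiStar_single]
  refine Eq.trans ((Finsupp.finset_sum_apply _ _ _).trans
    (Finset.sum_congr rfl fun S _ => Finsupp.finset_sum_apply _ _ _)) ?_
  refine Eq.trans ?_ (((Finsupp.finset_sum_apply _ _ _).trans
    (Finset.sum_congr rfl fun d _ => (Finsupp.smul_apply _ _ _).trans
      (congrArg _ (Finsupp.finset_sum_apply _ _ X)))).symm)
  simp only [Finsupp.single_apply,
    Finsupp.smul_apply, Finset.sum_ite_eq', Finset.mem_filter, Finset.mem_univ, true_and,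
    smul_ite, smul_zero, smul_eq_mul, mul_one]
  rw [Finset.sum_attach _ (fun S => if S ⊆ X.1 then (1:R) else 0), Finset.sum_boole]
  have hLfs : (Y.1.powerset.filter fun S => (S.card : ℤ) = (k:ℤ) - t).filter
      (fun S => S ⊆ X.1) = (X.1 ∩ Y.1).powersetCard (k - t) := by
    ext S
    simp only [Finset.mem_filter, Finset.mem_powerset, Finset.mem_powersetCard,
      Finset.subset_inter_iff]
    constructor
    · rintro ⟨⟨h1, h2⟩, h3⟩
      exact ⟨⟨h3, h1⟩, by omega⟩
    · rintro ⟨⟨h1, h2⟩, h3⟩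
      exact ⟨⟨h2, by omega⟩, h1⟩
  rw [hLfs, Finset.card_powersetCard]
  have hcond : ∀ d, ((X.1 ∆ Y.1).card = 2 * d) ↔ d = k - c := by
    intro d; omega
  rw [Finset.sum_congr rfl (fun d _ => by rw [if_congr (hcond d) rfl rfl])]
  simp only [mul_ite, mul_one, mul_zero]
  rw [Finset.sum_ite_eq' (Finset.range (t+1)) (k - c)
      (fun d => ((k - d).choose (t - d) : R))]
  simp only [Finset.mem_range]
  by_cases h : k - c < t + 1
  · rw [if_pos h]
    have hle : k - t ≤ c := by omega
    have : c.choose (k - t) = c.choose (c - (k - t)) := (Nat.choose_symm hle).symm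
    rw [this]
    congr 2 <;> omega
  · rw [if_neg h, Nat.choose_eq_zero_of_lt (by omega), Nat.cast_zero]
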